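/- Let (M, g) be the D-dimensional static metric ds² = −f(r) dt² + g(r) dr² + r² (dχ² + s²(χ) dΩ²_{D−3}) with f > 0, g > 0 and s(χ) = sin χ, χ, or sinh χ (spherical, planar, or hyperbolic symmetry), and let S_r be a hypersurface of constant radius r with unit normal n = √g dr. Then the trace-free part of the second fundamental form of S_r in the orthonormal tetrad {e_{(μ)}} with e_{(μ)} ∝ ∂_μ is σ_{(μ)(ν)} = −(1/(2(D−1))) ((f r^{−2})′/(f r^{−2})) g^{−1/2} M_{(μ)(ν)}, where M_{(μ)(ν)} = diag[D−2, 0, 1, ..., 1] and ′ denotes d/dr. Consequently, S_r is a photon surface if and only if (f r^{−2})′ = 0 at that radius. -/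

import Mathlib

set_option autoImplicit false
noncomputable section

/-- Diagonal components `g_{μμ}` of the `D`-dimensional static metric
`ds² = −f(r) dt² + g(r) dr² + r² (dχ² + s²(χ) dΩ²_{D−3})`
in the coordinates `(x 0, x 1, x 2, x 3, …) = (t, r, χ, θ₁, …, θ_{D−3})`,
where `dΩ²_{D−3}` is the round metric of the unit `(D−3)`-sphere. -/
def metricComp (f gg s : ℝ → ℝ) (μ : ℕ) (x : ℕ → ℝ) : ℝ :=
  if μ = 0 then - f (x 1)
  else if μ = 1 then gg (x 1)
  else if μ = 2 then (x 1) ^ 2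
  else (x 1) ^ 2 * (s (x 2)) ^ 2 * ∏ j ∈ Finset.Ico 3 μ, (Real.sin (x j)) ^ 2

/-- components of the induced (tetrad) Minkowski metric `h_{(μ)(ν)}` tangent to a
constant-radius hypersurface; the normal direction `μ = 1` is excluded -/
def etaTangent (μ ν : ℕ) : ℝ :=
  if μ = ν then (if μ = 0 then (-1 : ℝ) else if μ = 1 then 0 else 1) else 0

/-- Components `χ_{(μ)(ν)}` of the second fundamental form of the constant-radius
hypersurface `S_r` with unit normal `n = √g dr`, in the orthonormal tetrad
`e_{(μ)} ∝ ∂_μ`: the diagonal formula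
`χ_{(μ)(μ)} = ∂_r g_{μμ} / (2 √(g_{rr}) |g_{μμ}|)` (off-diagonal components vanish). -/
def chiTetrad (f gg s : ℝ → ℝ) (μ : ℕ) (x : ℕ → ℝ) : ℝ :=
  if μ = 1 then 0
  else (2 * Real.sqrt (gg (x 1)))⁻¹ *
    deriv (fun r => metricComp f gg s μ (Function.update x 1 r)) (x 1)
      / |metricComp f gg s μ x|

/-- the trace `Θ = h^{(μ)(ν)} χ_{(μ)(ν)}` of the second fundamental form of `S_r` -/
def thetaTetrad (D : ℕ) (f gg s : ℝ → ℝ) (x : ℕ → ℝ) : ℝ :=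
  ∑ μ ∈ Finset.range D, etaTangent μ μ * chiTetrad f gg s μ x

/-- the trace-free part `σ_{(μ)(ν)} = χ_{(μ)(ν)} − Θ h_{(μ)(ν)}/(D−1)` of the second
fundamental form of `S_r`, in the orthonormal tetrad -/
def sigmaTetrad (D : ℕ) (f gg s : ℝ → ℝ) (μ ν : ℕ) (x : ℕ → ℝ) : ℝ :=
  (if μ = ν then chiTetrad f gg s μ x else 0)
    - thetaTetrad D f gg s x / ((D : ℝ) - 1) * etaTangent μ ν

/-- the matrix `M_{(μ)(ν)} = diag[D−2, 0, 1, …, 1]` -/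
def Mdiag (D : ℕ) (μ ν : ℕ) : ℝ :=
  if μ = ν then (if μ = 0 then (D : ℝ) - 2 else if μ = 1 then 0 else 1) else 0

/-- a point in the coordinate domain, off the symmetry axis -/
def RegularPoint (D : ℕ) (s : ℝ → ℝ) (x : ℕ → ℝ) : Prop :=
  0 < x 1 ∧ s (x 2) ≠ 0 ∧ ∀ j : ℕ, 3 ≤ j → j < D → Real.sin (x j) ≠ 0

/-- By the Claudel–Virbhadra–Ellis/Perlick theorem, a timelike hypersurface is a photon
surface iff the trace-free part of its second fundamental form vanishes identically;
for a constant-radius hypersurface `S_r` this is the following condition. -/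
def IsConstRadiusPhotonSurface (D : ℕ) (f gg s : ℝ → ℝ) (r : ℝ) : Prop :=
  ∀ x : ℕ → ℝ, x 1 = r → RegularPoint D s x →
    ∀ μ < D, ∀ ν < D, sigmaTetrad D f gg s μ ν x = 0

namespace SigmaAux

variable (f gg s : ℝ → ℝ) (x : ℕ → ℝ)

lemma upd0 : (fun r => metricComp f gg s 0 (Function.update x 1 r)) = fun r => - f r := by
  funext r; simp [metricComp]

lemma upd2 : (fun r => metricComp f gg s 2 (Function.update x 1 r)) = fun r => r ^ 2 := by
  funext r; simp [metricComp]

lemma upd3 {μ : ℕ} (hμ : 3 ≤ μ) :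
    (fun r => metricComp f gg s μ (Function.update x 1 r))
      = fun r => r ^ 2 * ((s (x 2)) ^ 2 * ∏ j ∈ Finset.Ico 3 μ, (Real.sin (x j)) ^ 2) := by
  funext r
  have h0 : μ ≠ 0 := by omega
  have h1 : μ ≠ 1 := by omega
  have h2 : μ ≠ 2 := by omega
  have hprod : ∏ j ∈ Finset.Ico 3 μ, (Real.sin ((Function.update x 1 r) j)) ^ 2
      = ∏ j ∈ Finset.Ico 3 μ, (Real.sin (x j)) ^ 2 :=
    Finset.prod_congr rfl (fun j hj => by
      rw [Function.update_of_ne (by simp [Finset.mem_Ico] at hj; omega)])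
  simp only [metricComp, h0, h1, h2, if_false, hprod]
  rw [Function.update_self, Function.update_of_ne (by norm_num : (2:ℕ) ≠ 1)]
  ring

lemma chi_zero (hf1 : 0 < f (x 1)) (hd : DifferentiableAt ℝ f (x 1)) :
    chiTetrad f gg s 0 x
      = (2 * Real.sqrt (gg (x 1)))⁻¹ * (-(deriv f (x 1))) / f (x 1) := by
  simp only [chiTetrad, if_neg (by norm_num : (0:ℕ) ≠ 1)]
  rw [upd0]
  have h1 : deriv (fun r => - f r) (x 1) = -(deriv f (x 1)) := by
    simp [deriv.neg]
  rw [h1]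
  have h2 : metricComp f gg s 0 x = - f (x 1) := by simp [metricComp]
  rw [h2, abs_neg, abs_of_pos hf1]

lemma chi_two (hx1 : 0 < x 1) :
    chiTetrad f gg s 2 x
      = (2 * Real.sqrt (gg (x 1)))⁻¹ * (2 * x 1) / (x 1) ^ 2 := by
  simp only [chiTetrad, if_neg (by norm_num : (2:ℕ) ≠ 1)]
  rw [upd2]
  have hd : deriv (fun r : ℝ => r ^ 2) (x 1) = 2 * x 1 := by
    simp [deriv_pow]
  rw [hd]
  have h2 : metricComp f gg s 2 x = (x 1) ^ 2 := by simp [metricComp]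
  rw [h2, abs_of_pos (by positivity)]

lemma chi_ge3 {μ : ℕ} (hμ : 3 ≤ μ) (hx1 : 0 < x 1)
    (hC : 0 < (s (x 2)) ^ 2 * ∏ j ∈ Finset.Ico 3 μ, (Real.sin (x j)) ^ 2) :
    chiTetrad f gg s μ x
      = (2 * Real.sqrt (gg (x 1)))⁻¹ * (2 * x 1) / (x 1) ^ 2 := by
  set C := (s (x 2)) ^ 2 * ∏ j ∈ Finset.Ico 3 μ, (Real.sin (x j)) ^ 2 with hCdef
  simp only [chiTetrad, if_neg (by omega : μ ≠ 1)]
  rw [upd3 f gg s x hμ]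
  have hd : deriv (fun r : ℝ => r ^ 2 * C) (x 1) = 2 * x 1 * C := by
    rw [deriv_mul_const (by fun_prop)]
    simp [deriv_pow]
  rw [hd]
  have hm : metricComp f gg s μ x = (x 1) ^ 2 * C := by
    simp only [metricComp, if_neg (by omega : μ ≠ 0), if_neg (by omega : μ ≠ 1),
      if_neg (by omega : μ ≠ 2), hCdef]
    ring
  rw [hm, abs_of_pos (by positivity)]
  rw [mul_div_assoc, show (2 * x 1 * C) / (x 1 ^ 2 * C) = 2 * x 1 / x 1 ^ 2 from
    mul_div_mul_right _ _ (ne_of_gt hC), ← mul_div_assoc]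

lemma sumIf {D : ℕ} (hD : 3 ≤ D) (a b : ℝ) :
    ∑ μ ∈ Finset.range D, (if μ = 0 then a else if μ = 1 then (0:ℝ) else b)
      = a + ((D : ℝ) - 2) * b := by
  rw [Finset.range_eq_Ico,
    ← Finset.sum_Ico_consecutive _ (by norm_num : 0 ≤ 2) (by omega : 2 ≤ D)]
  have h1 : ∑ μ ∈ Finset.Ico 0 2, (if μ = 0 then a else if μ = 1 then (0:ℝ) else b) = a := by
    norm_num [Finset.sum_Ico_eq_sum_range, Finset.sum_range_succ]
  have h2 : ∑ μ ∈ Finset.Ico 2 D, (if μ = 0 then a else if μ = 1 then (0:ℝ) else b)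
      = ((D : ℝ) - 2) * b := by
    rw [Finset.sum_congr rfl (fun j hj => by
      simp only [Finset.mem_Ico] at hj
      rw [if_neg (by omega), if_neg (by omega)])]
    rw [Finset.sum_const, Nat.card_Ico, nsmul_eq_mul]
    congr 1
    have h2' : (2:ℕ) ≤ D := by omega
    push_cast [Nat.cast_sub h2']
    ring
  rw [h1, h2]

lemma prodC_pos {D μ : ℕ} (hμD : μ ≤ D) (hs2 : s (x 2) ≠ 0)
    (hsin : ∀ j : ℕ, 3 ≤ j → j < D → Real.sin (x j) ≠ 0) :
    0 < (s (x 2)) ^ 2 * ∏ j ∈ Finset.Ico 3 μ, (Real.sin (x j)) ^ 2 := by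
  refine mul_pos (by positivity) (Finset.prod_pos fun j hj => ?_)
  simp only [Finset.mem_Ico] at hj
  have := hsin j hj.1 (by omega)
  positivity

lemma theta_eq {D : ℕ} (hD : 3 ≤ D) (hx : RegularPoint D s x)
    (hf1 : 0 < f (x 1)) (hd : DifferentiableAt ℝ f (x 1)) :
    thetaTetrad D f gg s x
      = (2 * Real.sqrt (gg (x 1)))⁻¹ * (deriv f (x 1)) / f (x 1)
        + ((D : ℝ) - 2) * ((2 * Real.sqrt (gg (x 1)))⁻¹ * (2 * x 1) / (x 1) ^ 2) := by
  obtain ⟨hx1, hs2, hsin⟩ := hx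
  rw [thetaTetrad, Finset.sum_congr rfl (fun μ hμ => ?_), sumIf hD]
  simp only [Finset.mem_range] at hμ
  by_cases h0 : μ = 0
  · subst h0
    rw [if_pos rfl, chi_zero f gg s x hf1 hd]
    have heta : etaTangent 0 0 = -1 := by norm_num [etaTangent]
    rw [heta]
    ring
  by_cases h1 : μ = 1
  · subst h1
    simp [etaTangent, chiTetrad]
  rw [if_neg h0, if_neg h1]
  have heta : etaTangent μ μ = 1 := by simp [etaTangent, h0, h1]
  rw [heta, one_mul]
  by_cases h2 : μ = 2
  · subst h2; exact chi_two f gg s x hx1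
  · exact chi_ge3 f gg s x (by omega) hx1
      (prodC_pos s x (le_of_lt hμ) hs2 hsin)

lemma sigma_formula {D : ℕ} (hD : 3 ≤ D) (f gg s : ℝ → ℝ)
    (hf : ∀ r > 0, 0 < f r) (hgg : ∀ r > 0, 0 < gg r)
    (hfd : ∀ r > 0, DifferentiableAt ℝ f r)
    (x : ℕ → ℝ) (hx : RegularPoint D s x) :
    ∀ μ < D, ∀ ν < D,
      sigmaTetrad D f gg s μ ν x
        = - (2 * ((D : ℝ) - 1))⁻¹
            * (deriv (fun r => f r / r ^ 2) (x 1) / (f (x 1) / (x 1) ^ 2))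
            * (Real.sqrt (gg (x 1)))⁻¹ * Mdiag D μ ν := by
  obtain ⟨hx1, hs2, hsin⟩ := hx
  have hF : 0 < f (x 1) := hf _ hx1
  have hG0 : 0 < gg (x 1) := hgg _ hx1
  have hd : DifferentiableAt ℝ f (x 1) := hfd _ hx1
  have hGpos : 0 < Real.sqrt (gg (x 1)) := Real.sqrt_pos.mpr hG0
  have hGne : Real.sqrt (gg (x 1)) ≠ 0 := ne_of_gt hGpos
  have hFne : f (x 1) ≠ 0 := ne_of_gt hF
  have hx1ne : x 1 ≠ 0 := ne_of_gt hx1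
  have hD3 : (3:ℝ) ≤ (D:ℝ) := by exact_mod_cast hD
  have hD1 : (D:ℝ) - 1 ≠ 0 := by linarith
  have hq : deriv (fun r => f r / r ^ 2) (x 1)
      = (deriv f (x 1) * (x 1) ^ 2 - f (x 1) * (2 * x 1)) / ((x 1) ^ 2) ^ 2 := by
    rw [deriv_fun_div hd (by fun_prop) (by positivity)]
    simp [deriv_pow_field]
  have hθ := theta_eq f gg s x hD ⟨hx1, hs2, hsin⟩ hF hd
  intro μ hμ ν hν
  by_cases hμν : μ = ν
  · subst hμν
    by_cases h0 : μ = 0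
    · subst h0
      simp only [sigmaTetrad, Mdiag, etaTangent, if_pos rfl, ↓reduceIte]
      rw [chi_zero f gg s x hF hd, hθ, hq]
      field_simp
      ring
    by_cases h1 : μ = 1
    · subst h1
      simp [sigmaTetrad, chiTetrad, etaTangent, Mdiag]
    have hχ : chiTetrad f gg s μ x
        = (2 * Real.sqrt (gg (x 1)))⁻¹ * (2 * x 1) / (x 1) ^ 2 := by
      by_cases h2 : μ = 2
      · subst h2; exact chi_two f gg s x hx1
      · exact chi_ge3 f gg s x (by omega) hx1
          (prodC_pos s x (le_of_lt hμ) hs2 hsin)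
    simp only [sigmaTetrad, Mdiag, etaTangent, if_pos rfl, if_neg h0, if_neg h1, ↓reduceIte]
    rw [hχ, hθ, hq]
    field_simp
    ring
  · simp [sigmaTetrad, etaTangent, Mdiag, hμν]

end SigmaAux

/-- For the `D`-dimensional static metric
`ds² = −f dt² + g dr² + r²(dχ² + s²(χ) dΩ²_{D−3})` with `f, g > 0` and
`s = sin, id, sinh` (spherical, planar or hyperbolic symmetry), the trace-free part of
the second fundamental form of the constant-radius hypersurface `S_r` (with unit normal
`n = √g dr`) in the orthonormal tetrad `e_{(μ)} ∝ ∂_μ` is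
`σ_{(μ)(ν)} = −(1/(2(D−1))) ((f r⁻²)′/(f r⁻²)) g^{−1/2} M_{(μ)(ν)}` with
`M = diag[D−2, 0, 1, …, 1]`.  Consequently `S_r` is a photon surface iff
`(f r⁻²)′ = 0` at that radius. -/
theorem sigma_of_constant_radius_surface {D : ℕ} (hD : 3 ≤ D)
    (f gg s : ℝ → ℝ)
    (hs : s = Real.sin ∨ s = (fun χ => χ) ∨ s = Real.sinh)
    (hf : ∀ r > 0, 0 < f r) (hgg : ∀ r > 0, 0 < gg r)
    (hfd : ∀ r > 0, DifferentiableAt ℝ f r)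
    (x : ℕ → ℝ) (hx : RegularPoint D s x) :
    (∀ μ < D, ∀ ν < D,
      sigmaTetrad D f gg s μ ν x
        = - (2 * ((D : ℝ) - 1))⁻¹
            * (deriv (fun r => f r / r ^ 2) (x 1) / (f (x 1) / (x 1) ^ 2))
            * (Real.sqrt (gg (x 1)))⁻¹ * Mdiag D μ ν)
    ∧ (IsConstRadiusPhotonSurface D f gg s (x 1)
        ↔ deriv (fun r => f r / r ^ 2) (x 1) = 0) := by
  refine ⟨SigmaAux.sigma_formula hD f gg s hf hgg hfd x hx, ?_, ?_⟩
  · intro h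
    have h00 := h x rfl hx 0 (by omega) 0 (by omega)
    rw [SigmaAux.sigma_formula hD f gg s hf hgg hfd x hx 0 (by omega) 0 (by omega)] at h00
    obtain ⟨hx1, hs2, hsin⟩ := hx
    have hF : 0 < f (x 1) := hf _ hx1
    have hG0 : 0 < gg (x 1) := hgg _ hx1
    have hGpos : 0 < Real.sqrt (gg (x 1)) := Real.sqrt_pos.mpr hG0
    have hD3 : (3:ℝ) ≤ (D:ℝ) := by exact_mod_cast hD
    have hM : Mdiag D 0 0 = (D:ℝ) - 2 := by simp [Mdiag]
    rw [hM] at h00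
    have hc1 : -(2 * ((D:ℝ) - 1))⁻¹ ≠ 0 := by
      simp only [ne_eq, neg_eq_zero, inv_eq_zero]
      intro hcontra; nlinarith
    have hc2 : (Real.sqrt (gg (x 1)))⁻¹ ≠ 0 := by positivity
    have hc3 : (D:ℝ) - 2 ≠ 0 := by intro hcontra; nlinarith
    have hqne : f (x 1) / (x 1) ^ 2 ≠ 0 := by positivity
    rcases mul_eq_zero.mp h00 with h' | h'
    · rcases mul_eq_zero.mp h' with h'' | h''
      · rcases mul_eq_zero.mp h'' with h''' | h'''
        · exact absurd h''' hc1
        · exact (div_eq_zero_iff.mp h''').resolve_right hqne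
      · exact absurd h'' hc2
    · exact absurd h' hc3
  · intro h0 y hy1 hyreg μ hμ ν hν
    rw [SigmaAux.sigma_formula hD f gg s hf hgg hfd y hyreg μ hμ ν hν, hy1, h0]
    simp
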